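/- Vector Bernstein inequality (Lemma 8). Let x₁, …, x_m be independent zero-mean random vectors in ℝ^d with Σ_{k=1}^m E[‖x_k‖₂²] ≤ M for some M > 0, and suppose ‖x_k‖₂ ≤ L almost surely for all k, where L > 0. Then for any τ with 0 < τ ≤ M/L, P[ ‖Σ_{k=1}^m x_k‖₂ ≥ √M + τ ] ≤ exp( −τ²/(4M) ). -/

import Mathlib

open MeasureTheory ProbabilityTheory
open scoped BigOperators

lemma exp_le_one_add_add_sq {x : ℝ} (hx : x ≤ 1) : Real.exp x ≤ 1 + x + x ^ 2 := by
  rcases le_total (-1) x with h | h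
  · have habs : |x| ≤ 1 := abs_le.2 ⟨h, hx⟩
    have hb := Real.exp_bound habs (by norm_num : (0:ℕ) < 3)
    have hsum : ∑ i ∈ Finset.range 3, x ^ i / i.factorial = 1 + x + x ^ 2 / 2 := by
      simp [Finset.sum_range_succ, Nat.factorial]
    rw [hsum] at hb
    norm_num [Nat.factorial] at hb
    have h3 : |x| ^ 3 ≤ x ^ 2 := by
      have h4 : |x| ^ 3 = |x| * x ^ 2 := by
        rw [pow_succ']
        congr 1
        exact sq_abs x
      rw [h4]
      nlinarith [sq_nonneg x, abs_nonneg x]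
    have := abs_le.1 hb
    nlinarith [sq_nonneg x]
  · have h1 : Real.exp x ≤ Real.exp (-1) := Real.exp_le_exp.2 h
    have h2 : Real.exp (-1) < 1/2 := by
      rw [Real.exp_neg]
      have := Real.exp_one_gt_d9
      rw [inv_lt_comm₀ (by positivity) (by norm_num)]
      linarith
    nlinarith [sq_nonneg (1 + 2*x)]

lemma bennett_step {α : Type*} [MeasurableSpace α] (ν : Measure α) [IsProbabilityMeasure ν]
    (W : α → ℝ) (hW : AEStronglyMeasurable W ν) (a Lb l : ℝ) (hLb : 0 ≤ Lb)
    (hb : ∀ᵐ y ∂ν, |W y - a| ≤ Lb) (hl : 0 ≤ l) (hlL : l * (2 * Lb) ≤ 1) :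
    ∫ y, Real.exp (l * (W y - ∫ z, W z ∂ν)) ∂ν
      ≤ Real.exp (l ^ 2 * ∫ y, (W y - a) ^ 2 ∂ν) := by
  have hWi : Integrable W ν := by
    refine Integrable.mono' (integrable_const (Lb + |a|)) hW ?_
    filter_upwards [hb] with y hy
    have h1 : |W y| ≤ |W y - a| + |a| := by
      calc |W y| = |(W y - a) + a| := by ring_nf
      _ ≤ |W y - a| + |a| := abs_add_le _ _
    rw [Real.norm_eq_abs]
    linarith
  set mW := ∫ z, W z ∂ν with hmWdef
  have hWa : Integrable (fun y => W y - a) ν := hWi.sub (integrable_const a)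
  have hWm : Integrable (fun y => W y - mW) ν := hWi.sub (integrable_const mW)
  have hWaM : AEStronglyMeasurable (fun y => W y - a) ν := hW.sub aestronglyMeasurable_const
  have hWmM : AEStronglyMeasurable (fun y => W y - mW) ν := hW.sub aestronglyMeasurable_const
  have hWa2 : Integrable (fun y => (W y - a) ^ 2) ν := by
    refine Integrable.mono' (integrable_const (Lb ^ 2)) ?_ ?_
    · simpa [pow_two, Pi.mul_def] using hWaM.mul hWaM
    · filter_upwards [hb] with y hy
      rw [Real.norm_eq_abs, abs_of_nonneg (sq_nonneg _)]
      nlinarith [abs_nonneg (W y - a), sq_abs (W y - a)]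
  have hma : |mW - a| ≤ Lb := by
    have h0 : ∫ y, (W y - a) ∂ν = mW - a := by
      rw [integral_sub hWi (integrable_const a), integral_const]
      simp [hmWdef]
    have h1 : |∫ y, (W y - a) ∂ν| ≤ ∫ y, |W y - a| ∂ν := by
      simpa [Real.norm_eq_abs] using norm_integral_le_integral_norm (fun y => W y - a) (μ := ν)
    have h2 : ∫ y, |W y - a| ∂ν ≤ ∫ _, Lb ∂ν := integral_mono_ae hWa.abs (integrable_const Lb) hb
    rw [integral_const] at h2
    simp only [probReal_univ, smul_eq_mul, one_mul] at h2
    rw [← h0]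
    linarith
  have hZb : ∀ᵐ y ∂ν, |W y - mW| ≤ 2 * Lb := by
    filter_upwards [hb] with y hy
    have : |W y - mW| ≤ |W y - a| + |mW - a| := by
      calc |W y - mW| = |(W y - a) - (mW - a)| := by ring_nf
      _ ≤ |W y - a| + |mW - a| := abs_sub _ _
    linarith
  have hWm2 : Integrable (fun y => (W y - mW) ^ 2) ν := by
    refine Integrable.mono' (integrable_const ((2 * Lb) ^ 2)) ?_ ?_
    · simpa [pow_two, Pi.mul_def] using hWmM.mul hWmM
    · filter_upwards [hZb] with y hy
      rw [Real.norm_eq_abs, abs_of_nonneg (sq_nonneg _)]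
      nlinarith [abs_nonneg (W y - mW), sq_abs (W y - mW)]
  -- pointwise exponent bound
  have hptwise : ∀ᵐ y ∂ν,
      Real.exp (l * (W y - mW)) ≤ 1 + l * (W y - mW) + l ^ 2 * (W y - mW) ^ 2 := by
    filter_upwards [hZb] with y hy
    have hx1 : l * (W y - mW) ≤ 1 := by
      have : l * (W y - mW) ≤ l * |W y - mW| :=
        mul_le_mul_of_nonneg_left (le_abs_self _) hl
      have h2 : l * |W y - mW| ≤ l * (2 * Lb) := mul_le_mul_of_nonneg_left hy hl
      linarith
    have := exp_le_one_add_add_sq hx1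
    calc Real.exp (l * (W y - mW)) ≤ 1 + l * (W y - mW) + (l * (W y - mW)) ^ 2 := this
    _ = 1 + l * (W y - mW) + l ^ 2 * (W y - mW) ^ 2 := by ring
  have hexpI : Integrable (fun y => Real.exp (l * (W y - mW))) ν := by
    refine Integrable.mono' (integrable_const (Real.exp 1)) ?_ ?_
    · exact Real.continuous_exp.comp_aestronglyMeasurable (hWmM.const_mul l)
    · filter_upwards [hZb] with y hy
      rw [Real.norm_eq_abs, abs_of_nonneg (Real.exp_nonneg _)]
      apply Real.exp_le_exp.2
      have : l * (W y - mW) ≤ l * |W y - mW| :=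
        mul_le_mul_of_nonneg_left (le_abs_self _) hl
      have h2 : l * |W y - mW| ≤ l * (2 * Lb) := mul_le_mul_of_nonneg_left hy hl
      linarith
  have hRHSint : Integrable (fun y => 1 + l * (W y - mW) + l ^ 2 * (W y - mW) ^ 2) ν :=
    ((integrable_const 1).add (hWm.const_mul l)).add (hWm2.const_mul (l ^ 2))
  have step1 : ∫ y, Real.exp (l * (W y - mW)) ∂ν
      ≤ ∫ y, (1 + l * (W y - mW) + l ^ 2 * (W y - mW) ^ 2) ∂ν :=
    integral_mono_ae hexpI hRHSint hptwise
  have hWmint : ∫ y, (W y - mW) ∂ν = 0 := by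
    rw [integral_sub hWi (integrable_const mW), integral_const]
    simp [hmWdef]
  have step2 : ∫ y, (1 + l * (W y - mW) + l ^ 2 * (W y - mW) ^ 2) ∂ν
      = 1 + l ^ 2 * ∫ y, (W y - mW) ^ 2 ∂ν := by
    have e1 : ∫ y, (1 + l * (W y - mW) + l ^ 2 * (W y - mW) ^ 2) ∂ν
        = ∫ y, (1 + l * (W y - mW)) ∂ν + ∫ y, l ^ 2 * (W y - mW) ^ 2 ∂ν :=
      integral_add ((integrable_const 1).add (hWm.const_mul l)) (hWm2.const_mul (l ^ 2))
    have e2 : ∫ y, (1 + l * (W y - mW)) ∂ν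
        = ∫ y, (1:ℝ) ∂ν + ∫ y, l * (W y - mW) ∂ν :=
      integral_add (integrable_const 1) (hWm.const_mul l)
    rw [e1, e2, integral_const, integral_const_mul, integral_const_mul, hWmint]
    simp
  have hvarle : ∫ y, (W y - mW) ^ 2 ∂ν ≤ ∫ y, (W y - a) ^ 2 ∂ν := by
    have hexpand : ∫ y, (W y - a) ^ 2 ∂ν
        = ∫ y, (W y - mW) ^ 2 ∂ν + (mW - a) ^ 2 := by
      have heq : (fun y => (W y - a) ^ 2)
          = fun y => ((W y - mW) ^ 2 + (2 * (mW - a)) * (W y - mW)) + (mW - a) ^ 2 := by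
        funext y; ring
      have e1 : ∫ y, ((W y - mW) ^ 2 + 2 * (mW - a) * (W y - mW) + (mW - a) ^ 2) ∂ν
          = ∫ y, ((W y - mW) ^ 2 + 2 * (mW - a) * (W y - mW)) ∂ν + ∫ y, ((mW - a) ^ 2) ∂ν :=
        integral_add (hWm2.add (hWm.const_mul _)) (integrable_const _)
      have e2 : ∫ y, ((W y - mW) ^ 2 + 2 * (mW - a) * (W y - mW)) ∂ν
          = ∫ y, (W y - mW) ^ 2 ∂ν + ∫ y, 2 * (mW - a) * (W y - mW) ∂ν :=
        integral_add hWm2 (hWm.const_mul _)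
      rw [heq, e1, e2, integral_const_mul, hWmint, integral_const]
      simp
    nlinarith [sq_nonneg (mW - a)]
  have hvar_nonneg : 0 ≤ ∫ y, (W y - a) ^ 2 ∂ν := integral_nonneg fun y => sq_nonneg _
  calc ∫ y, Real.exp (l * (W y - mW)) ∂ν
      ≤ 1 + l ^ 2 * ∫ y, (W y - mW) ^ 2 ∂ν := by rw [← step2]; exact step1
  _ ≤ 1 + l ^ 2 * ∫ y, (W y - a) ^ 2 ∂ν := by
      have := mul_le_mul_of_nonneg_left hvarle (sq_nonneg l)
      linarith
  _ ≤ Real.exp (l ^ 2 * ∫ y, (W y - a) ^ 2 ∂ν) := by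
      have := Real.add_one_le_exp (l ^ 2 * ∫ y, (W y - a) ^ 2 ∂ν)
      linarith

lemma step_lemma {Ω : Type*} [MeasurableSpace Ω] (μ : Measure Ω) [IsProbabilityMeasure μ]
    {d : ℕ} (Y B : Ω → EuclideanSpace ℝ (Fin d)) (hY : Measurable Y) (hB : Measurable B)
    (hindep : IndepFun Y B μ) (L R : ℝ) (hL : 0 ≤ L) (hR : 0 ≤ R)
    (hYb : ∀ᵐ ω ∂μ, ‖Y ω‖ ≤ L) (hBb : ∀ᵐ ω ∂μ, ‖B ω‖ ≤ R)
    (l : ℝ) (hl : 0 ≤ l) (hlL : l * (2 * L) ≤ 1)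
    (K : ℝ) (hK : 0 ≤ K)
    (ih : ∀ c' : EuclideanSpace ℝ (Fin d),
      ∫ ω, Real.exp (l * (‖c' + B ω‖ - ∫ ω', ‖c' + B ω'‖ ∂μ)) ∂μ ≤ K)
    (c : EuclideanSpace ℝ (Fin d)) (σ2 : ℝ) (hσ : ∫ ω, ‖Y ω‖ ^ 2 ∂μ ≤ σ2) :
    ∫ ω, Real.exp (l * (‖c + (Y ω + B ω)‖ - ∫ ω', ‖c + (Y ω' + B ω')‖ ∂μ)) ∂μ
      ≤ K * Real.exp (l ^ 2 * σ2) := by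
  classical
  set m₀ := ∫ ω', ‖c + (Y ω' + B ω')‖ ∂μ with hm₀def
  set ν := μ.map Y with hνdef
  set ρ := μ.map B with hρdef
  haveI : IsProbabilityMeasure ν := Measure.isProbabilityMeasure_map hY.aemeasurable
  haveI : IsProbabilityMeasure ρ := Measure.isProbabilityMeasure_map hB.aemeasurable
  -- integrability of norms
  have intNorm : ∀ v : EuclideanSpace ℝ (Fin d), Integrable (fun ω => ‖v + B ω‖) μ := by
    intro v
    refine Integrable.mono' (integrable_const (‖v‖ + R)) ?_ ?_
    · exact ((measurable_const.add hB).norm).aestronglyMeasurable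
    · filter_upwards [hBb] with ω hω
      rw [Real.norm_eq_abs, abs_of_nonneg (norm_nonneg _)]
      calc ‖v + B ω‖ ≤ ‖v‖ + ‖B ω‖ := norm_add_le _ _
      _ ≤ ‖v‖ + R := by linarith
  set h : EuclideanSpace ℝ (Fin d) → ℝ := fun y => ∫ ω, ‖c + y + B ω‖ ∂μ with hhdef
  have hlip : ∀ y y', |h y - h y'| ≤ ‖y - y'‖ := by
    intro y y'
    have hsub : h y - h y' = ∫ ω, (‖c + y + B ω‖ - ‖c + y' + B ω‖) ∂μ :=
      (integral_sub (intNorm _) (intNorm _)).symm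
    rw [hsub]
    have h1 : |∫ ω, (‖c + y + B ω‖ - ‖c + y' + B ω‖) ∂μ|
        ≤ ∫ ω, |‖c + y + B ω‖ - ‖c + y' + B ω‖| ∂μ := by
      simpa [Real.norm_eq_abs] using
        norm_integral_le_integral_norm (μ := μ) (fun ω => ‖c + y + B ω‖ - ‖c + y' + B ω‖)
    have h2 : ∫ ω, |‖c + y + B ω‖ - ‖c + y' + B ω‖| ∂μ ≤ ∫ _ω, ‖y - y'‖ ∂μ := by
      refine integral_mono_ae ((intNorm _).sub (intNorm _)).abs (integrable_const _) ?_
      filter_upwards with ω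
      have := abs_norm_sub_norm_le (c + y + B ω) (c + y' + B ω)
      have heq : (c + y + B ω) - (c + y' + B ω) = y - y' := by abel
      rwa [heq] at this
    rw [integral_const] at h2
    simp only [probReal_univ, smul_eq_mul, one_mul] at h2
    linarith
  have hcont : Continuous h := by
    have : LipschitzWith 1 h := by
      apply LipschitzWith.of_dist_le_mul
      intro y y'
      simpa [Real.dist_eq, dist_eq_norm] using hlip y y'
    exact this.continuous
  -- a.e. bounds on mapped measures
  have hνb : ∀ᵐ y ∂ν, ‖y‖ ≤ L := by
    rw [hνdef, ae_map_iff hY.aemeasurable (measurableSet_le measurable_norm measurable_const)]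
    exact hYb
  have hρb : ∀ᵐ b ∂ρ, ‖b‖ ≤ R := by
    rw [hρdef, ae_map_iff hB.aemeasurable (measurableSet_le measurable_norm measurable_const)]
    exact hBb
  have haeprod : ∀ᵐ p ∂(ν.prod ρ), ‖p.1‖ ≤ L ∧ ‖p.2‖ ≤ R := by
    rw [ae_iff]
    refine measure_mono_null ?_
      (Measure.measure_prod_compl_eq_zero (s := {y : EuclideanSpace ℝ (Fin d) | ‖y‖ ≤ L}) (t := {b : EuclideanSpace ℝ (Fin d) | ‖b‖ ≤ R})
        (ae_iff.1 hνb) (ae_iff.1 hρb))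
    intro p hp
    simp only [Set.mem_setOf_eq, not_and_or] at hp
    simp only [Set.mem_compl_iff, Set.mem_prod, Set.mem_setOf_eq, not_and_or]
    tauto
  -- joint law is a product
  have hpair : AEMeasurable (fun ω => (Y ω, B ω)) μ := (hY.prodMk hB).aemeasurable
  have hmap : μ.map (fun ω => (Y ω, B ω)) = ν.prod ρ := by
    rw [hνdef, hρdef]
    exact (indepFun_iff_map_prod_eq_prod_map_map hY.aemeasurable hB.aemeasurable).1 hindep
  -- integrable functions on the product
  have hGcont : Continuous (fun p : EuclideanSpace ℝ (Fin d) × EuclideanSpace ℝ (Fin d) => ‖c + (p.1 + p.2)‖) :=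
    (continuous_const.add (continuous_fst.add continuous_snd)).norm
  have hGint : Integrable (fun p : EuclideanSpace ℝ (Fin d) × EuclideanSpace ℝ (Fin d) => ‖c + (p.1 + p.2)‖) (ν.prod ρ) := by
    refine Integrable.mono' (integrable_const (‖c‖ + L + R)) hGcont.aestronglyMeasurable ?_
    filter_upwards [haeprod] with p hp
    rw [Real.norm_eq_abs, abs_of_nonneg (norm_nonneg _)]
    calc ‖c + (p.1 + p.2)‖ ≤ ‖c‖ + (‖p.1‖ + ‖p.2‖) :=
      (norm_add_le _ _).trans (by gcongr; exact norm_add_le _ _)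
    _ ≤ ‖c‖ + L + R := by linarith [hp.1, hp.2]
  have hFcont : Continuous (fun p : EuclideanSpace ℝ (Fin d) × EuclideanSpace ℝ (Fin d) => Real.exp (l * (‖c + (p.1 + p.2)‖ - m₀))) :=
    Real.continuous_exp.comp (continuous_const.mul (hGcont.sub continuous_const))
  have hFint : Integrable (fun p : EuclideanSpace ℝ (Fin d) × EuclideanSpace ℝ (Fin d) => Real.exp (l * (‖c + (p.1 + p.2)‖ - m₀)))
      (ν.prod ρ) := by
    refine Integrable.mono' (integrable_const (Real.exp (l * (‖c‖ + L + R + |m₀|))))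
      hFcont.aestronglyMeasurable ?_
    filter_upwards [haeprod] with p hp
    rw [Real.norm_eq_abs, abs_of_nonneg (Real.exp_nonneg _)]
    apply Real.exp_le_exp.2
    have h1 : ‖c + (p.1 + p.2)‖ ≤ ‖c‖ + L + R := by
      calc ‖c + (p.1 + p.2)‖ ≤ ‖c‖ + (‖p.1‖ + ‖p.2‖) :=
        (norm_add_le _ _).trans (by gcongr; exact norm_add_le _ _)
      _ ≤ ‖c‖ + L + R := by linarith [hp.1, hp.2]
    have h2 : -m₀ ≤ |m₀| := neg_le_abs m₀
    have : ‖c + (p.1 + p.2)‖ - m₀ ≤ ‖c‖ + L + R + |m₀| := by linarith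
    exact mul_le_mul_of_nonneg_left this hl
  -- h y as inner integral
  have hinner_eq : ∀ y : EuclideanSpace ℝ (Fin d), ∫ b, ‖c + (y + b)‖ ∂ρ = h y := by
    intro y
    have e := integral_map (μ := μ) hB.aemeasurable
      (f := fun b => ‖c + (y + b)‖)
      ((by fun_prop : Continuous fun b : EuclideanSpace ℝ (Fin d) =>
        ‖c + (y + b)‖).aestronglyMeasurable)
    rw [hρdef, e]
    simp only [hhdef, ← add_assoc]
  -- Fubini for the mean
  have hfub_m0 : m₀ = ∫ y, h y ∂ν := by
    have e1 : m₀ = ∫ p, ‖c + (p.1 + p.2)‖ ∂(μ.map (fun ω => (Y ω, B ω))) := by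
      rw [integral_map hpair hGcont.aestronglyMeasurable]
    rw [e1, hmap, integral_prod _ hGint]
    exact integral_congr_ae (Filter.Eventually.of_forall fun y => hinner_eq y)
  -- main computation
  have key1 : ∫ ω, Real.exp (l * (‖c + (Y ω + B ω)‖ - m₀)) ∂μ
      = ∫ y, ∫ b, Real.exp (l * (‖c + (y + b)‖ - m₀)) ∂ρ ∂ν := by
    have e1 : ∫ ω, Real.exp (l * (‖c + (Y ω + B ω)‖ - m₀)) ∂μ
        = ∫ p, Real.exp (l * (‖c + (p.1 + p.2)‖ - m₀)) ∂(μ.map (fun ω => (Y ω, B ω))) := by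
      rw [integral_map hpair hFcont.aestronglyMeasurable]
    rw [e1, hmap, integral_prod _ hFint]
  have hinner_le : ∀ y : EuclideanSpace ℝ (Fin d), ∫ b, Real.exp (l * (‖c + (y + b)‖ - m₀)) ∂ρ
      ≤ Real.exp (l * (h y - m₀)) * K := by
    intro y
    have e1 : ∫ b, Real.exp (l * (‖c + (y + b)‖ - m₀)) ∂ρ
        = ∫ ω, Real.exp (l * (‖c + y + B ω‖ - m₀)) ∂μ := by
      have e := integral_map (μ := μ) hB.aemeasurable
        (f := fun b => Real.exp (l * (‖c + (y + b)‖ - m₀)))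
        ((by fun_prop : Continuous fun b : EuclideanSpace ℝ (Fin d) =>
          Real.exp (l * (‖c + (y + b)‖ - m₀))).aestronglyMeasurable)
      rw [hρdef, e]
      simp only [← add_assoc]
    have e2 : ∫ ω, Real.exp (l * (‖c + y + B ω‖ - m₀)) ∂μ
        = Real.exp (l * (h y - m₀)) * ∫ ω, Real.exp (l * (‖c + y + B ω‖ - h y)) ∂μ := by
      rw [← integral_const_mul]
      congr 1
      funext ω
      rw [← Real.exp_add]
      congr 1
      ring
    rw [e1, e2]
    have := ih (c + y)
    have hihy : ∫ ω, Real.exp (l * (‖c + y + B ω‖ - h y)) ∂μ ≤ K := by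
      simpa only [hhdef] using ih (c + y)
    exact mul_le_mul_of_nonneg_left hihy (Real.exp_nonneg _)
  -- outer integral
  have houter_int : Integrable (fun y => Real.exp (l * (h y - m₀)) * K) ν := by
    refine Integrable.mono' (integrable_const (Real.exp (l * (|h 0| + L + |m₀|)) * K)) ?_ ?_
    · exact ((Real.continuous_exp.comp (continuous_const.mul (hcont.sub continuous_const))).mul
        continuous_const).aestronglyMeasurable
    · filter_upwards [hνb] with y hy
      rw [Real.norm_eq_abs, abs_of_nonneg (mul_nonneg (Real.exp_nonneg _) hK)]
      refine mul_le_mul_of_nonneg_right ?_ hK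
      apply Real.exp_le_exp.2
      refine mul_le_mul_of_nonneg_left ?_ hl
      have h1 : |h y - h 0| ≤ ‖y‖ := by simpa using hlip y 0
      have h2 : h y ≤ |h 0| + ‖y‖ := by
        have := (abs_le.1 h1).2
        have := le_abs_self (h 0)
        linarith
      have h3 : -m₀ ≤ |m₀| := neg_le_abs m₀
      linarith
  have key2 : ∫ y, ∫ b, Real.exp (l * (‖c + (y + b)‖ - m₀)) ∂ρ ∂ν
      ≤ ∫ y, Real.exp (l * (h y - m₀)) * K ∂ν := by
    refine integral_mono_of_nonneg ?_ houter_int ?_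
    · filter_upwards with y
      exact integral_nonneg fun b => Real.exp_nonneg _
    · filter_upwards with y
      exact hinner_le y
  -- Bennett on the outer integral
  have hbW : ∀ᵐ y ∂ν, |h y - h 0| ≤ L := by
    filter_upwards [hνb] with y hy
    have h1 : |h y - h 0| ≤ ‖y‖ := by simpa using hlip y 0
    linarith
  have hbennett := bennett_step ν h hcont.aestronglyMeasurable (h 0) L l hL hbW hl hlL
  rw [← hfub_m0] at hbennett
  have hvarle : ∫ y, (h y - h 0) ^ 2 ∂ν ≤ σ2 := by
    have h1 : ∫ y, (h y - h 0) ^ 2 ∂ν ≤ ∫ y, ‖y‖ ^ 2 ∂ν := by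
      refine integral_mono_ae ?_ ?_ ?_
      · refine Integrable.mono' (integrable_const (L ^ 2)) ?_ ?_
        · have : Continuous (fun y => (h y - h 0) ^ 2) := (hcont.sub continuous_const).pow 2
          exact this.aestronglyMeasurable
        · filter_upwards [hbW] with y hy
          rw [Real.norm_eq_abs, abs_of_nonneg (sq_nonneg _)]
          nlinarith [abs_nonneg (h y - h 0), sq_abs (h y - h 0)]
      · refine Integrable.mono' (integrable_const (L ^ 2)) ?_ ?_
        · exact (continuous_norm.pow 2).aestronglyMeasurable
        · filter_upwards [hνb] with y hy
          rw [Real.norm_eq_abs, abs_of_nonneg (sq_nonneg _)]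
          nlinarith [norm_nonneg y]
      · filter_upwards with y
        have h1 : |h y - h 0| ≤ ‖y‖ := by simpa using hlip y 0
        nlinarith [abs_nonneg (h y - h 0), sq_abs (h y - h 0)]
    have h2 : ∫ y, ‖y‖ ^ 2 ∂ν = ∫ ω, ‖Y ω‖ ^ 2 ∂μ := by
      rw [hνdef, integral_map (f := fun y : EuclideanSpace ℝ (Fin d) => ‖y‖ ^ 2) hY.aemeasurable (continuous_norm.pow 2 : Continuous fun y : EuclideanSpace ℝ (Fin d) => ‖y‖ ^ 2).aestronglyMeasurable]
    linarith
  have key3 : ∫ y, Real.exp (l * (h y - m₀)) ∂ν ≤ Real.exp (l ^ 2 * σ2) := by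
    refine hbennett.trans ?_
    apply Real.exp_le_exp.2
    exact mul_le_mul_of_nonneg_left hvarle (sq_nonneg l)
  calc ∫ ω, Real.exp (l * (‖c + (Y ω + B ω)‖ - m₀)) ∂μ
      = ∫ y, ∫ b, Real.exp (l * (‖c + (y + b)‖ - m₀)) ∂ρ ∂ν := key1
  _ ≤ ∫ y, Real.exp (l * (h y - m₀)) * K ∂ν := key2
  _ = (∫ y, Real.exp (l * (h y - m₀)) ∂ν) * K := integral_mul_const _ _
  _ ≤ Real.exp (l ^ 2 * σ2) * K := mul_le_mul_of_nonneg_right key3 hK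
  _ = K * Real.exp (l ^ 2 * σ2) := mul_comm _ _

lemma mgf_aux {Ω : Type*} [MeasurableSpace Ω] (μ : Measure Ω) [IsProbabilityMeasure μ]
    {m d : ℕ} (X : Fin m → Ω → EuclideanSpace ℝ (Fin d))
    (hmeas : ∀ k, Measurable (X k))
    (hindep : iIndepFun X μ)
    (L : ℝ) (hL : 0 ≤ L) (hbdd : ∀ k, ∀ᵐ ω ∂μ, ‖X k ω‖ ≤ L)
    (l : ℝ) (hl : 0 ≤ l) (hlL : l * (2 * L) ≤ 1) :
    ∀ (s : Finset (Fin m)) (c : EuclideanSpace ℝ (Fin d)),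
      ∫ ω, Real.exp (l * (‖c + ∑ k ∈ s, X k ω‖ - ∫ ω', ‖c + ∑ k ∈ s, X k ω'‖ ∂μ)) ∂μ
        ≤ Real.exp (l ^ 2 * ∑ k ∈ s, ∫ ω, ‖X k ω‖ ^ 2 ∂μ) := by
  intro s
  classical
  induction s using Finset.induction_on with
  | empty =>
    intro c
    simp
  | @insert j s hj ihs =>
    intro c
    have hBmeas : Measurable (fun ω => ∑ k ∈ s, X k ω) :=
      Finset.measurable_sum s (fun k _ => hmeas k)
    have hBb : ∀ᵐ ω ∂μ, ‖∑ k ∈ s, X k ω‖ ≤ (s.card : ℝ) * L := by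
      have hall : ∀ᵐ ω ∂μ, ∀ k, ‖X k ω‖ ≤ L := ae_all_iff.2 hbdd
      filter_upwards [hall] with ω hω
      calc ‖∑ k ∈ s, X k ω‖ ≤ ∑ k ∈ s, ‖X k ω‖ := norm_sum_le _ _
      _ ≤ ∑ _k ∈ s, L := Finset.sum_le_sum fun k _ => hω k
      _ = (s.card : ℝ) * L := by simp [Finset.sum_const, nsmul_eq_mul]
    have hindepYB : IndepFun (X j) (fun ω => ∑ k ∈ s, X k ω) μ := by
      have h0 := (hindep.indepFun_finsetSum_of_notMem hmeas hj).symm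
      have he : (∑ k ∈ s, X k) = fun ω => ∑ k ∈ s, X k ω := by
        funext ω; simp [Finset.sum_apply]
      rwa [he] at h0
    have hstep := step_lemma μ (X j) (fun ω => ∑ k ∈ s, X k ω) (hmeas j) hBmeas hindepYB
      L ((s.card : ℝ) * L) hL (by positivity) (hbdd j) hBb l hl hlL
      (Real.exp (l ^ 2 * ∑ k ∈ s, ∫ ω, ‖X k ω‖ ^ 2 ∂μ)) (Real.exp_nonneg _)
      (fun c' => ihs c') c (∫ ω, ‖X j ω‖ ^ 2 ∂μ) le_rfl
    have hsum : ∀ ω, ∑ k ∈ insert j s, X k ω = X j ω + ∑ k ∈ s, X k ω := fun ω =>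
      Finset.sum_insert hj
    simp only [hsum]
    calc ∫ ω, Real.exp (l * (‖c + (X j ω + ∑ k ∈ s, X k ω)‖ -
          ∫ ω', ‖c + (X j ω' + ∑ k ∈ s, X k ω')‖ ∂μ)) ∂μ
        ≤ Real.exp (l ^ 2 * ∑ k ∈ s, ∫ ω, ‖X k ω‖ ^ 2 ∂μ) *
          Real.exp (l ^ 2 * ∫ ω, ‖X j ω‖ ^ 2 ∂μ) := hstep
    _ = Real.exp (l ^ 2 * ∑ k ∈ insert j s, ∫ ω, ‖X k ω‖ ^ 2 ∂μ) := by
        rw [← Real.exp_add, Finset.sum_insert hj]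
        ring_nf

lemma coord_abs_le_norm {d : ℕ} (x : EuclideanSpace ℝ (Fin d)) (i : Fin d) : |x i| ≤ ‖x‖ := by
  rw [EuclideanSpace.norm_eq]
  rw [show |x i| = Real.sqrt (|x i| ^ 2) by rw [Real.sqrt_sq_eq_abs, abs_abs]]
  apply Real.sqrt_le_sqrt
  rw [sq_abs]
  have : x i ^ 2 = ‖x i‖ ^ 2 := by rw [Real.norm_eq_abs, sq_abs]
  rw [this]
  exact Finset.single_le_sum (fun j _ => sq_nonneg ‖x j‖) (Finset.mem_univ i)

/-- **Vector Bernstein inequality (Lemma 8).**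
Let `x₁, …, x_m` be independent zero-mean random vectors in `ℝ^d` with
`∑ E[‖x_k‖²] ≤ M` and `‖x_k‖ ≤ L` almost surely.  Then for any `0 < τ ≤ M / L`,
`P[‖∑ x_k‖ ≥ √M + τ] ≤ exp(−τ²/(4M))`. -/
theorem vector_bernstein_inequality
    {Ω : Type*} [MeasurableSpace Ω] (μ : Measure Ω) [IsProbabilityMeasure μ]
    (m d : ℕ) (X : Fin m → Ω → EuclideanSpace ℝ (Fin d))
    (hmeas : ∀ k, Measurable (X k))
    (hint : ∀ k, Integrable (X k) μ)
    (hindep : iIndepFun X μ)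
    (hmean : ∀ k, ∫ ω, X k ω ∂μ = 0)
    (M : ℝ) (hM : 0 < M)
    (hvar : ∑ k, ∫ ω, ‖X k ω‖ ^ 2 ∂μ ≤ M)
    (L : ℝ) (hL : 0 < L)
    (hbdd : ∀ k, ∀ᵐ ω ∂μ, ‖X k ω‖ ≤ L)
    (τ : ℝ) (hτ : 0 < τ) (hτ' : τ ≤ M / L) :
    (μ {ω | Real.sqrt M + τ ≤ ‖∑ k, X k ω‖}).toReal ≤
      Real.exp (-τ ^ 2 / (4 * M)) := by
  classical
  have hall : ∀ᵐ ω ∂μ, ∀ k, ‖X k ω‖ ≤ L := ae_all_iff.2 hbdd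
  have hSmeas : Measurable (fun ω => ∑ k, X k ω) :=
    Finset.measurable_sum _ (fun k _ => hmeas k)
  have hSb : ∀ᵐ ω ∂μ, ‖∑ k, X k ω‖ ≤ (m : ℝ) * L := by
    filter_upwards [hall] with ω hω
    calc ‖∑ k, X k ω‖ ≤ ∑ k, ‖X k ω‖ := norm_sum_le _ _
    _ ≤ ∑ _k : Fin m, L := Finset.sum_le_sum fun k _ => hω k
    _ = (m : ℝ) * L := by simp [Finset.sum_const, nsmul_eq_mul]
  -- basic integrability
  have hSnormint : Integrable (fun ω => ‖∑ k, X k ω‖) μ := by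
    refine Integrable.mono' (integrable_const ((m : ℝ) * L)) hSmeas.norm.aestronglyMeasurable ?_
    filter_upwards [hSb] with ω hω
    rwa [Real.norm_eq_abs, abs_of_nonneg (norm_nonneg _)]
  have hSsqint : Integrable (fun ω => ‖∑ k, X k ω‖ ^ 2) μ := by
    refine Integrable.mono' (integrable_const (((m : ℝ) * L) ^ 2)) ?_ ?_
    · exact (hSmeas.norm.pow_const 2).aestronglyMeasurable
    · filter_upwards [hSb] with ω hω
      rw [Real.norm_eq_abs, abs_of_nonneg (sq_nonneg _)]
      have h0 : (0:ℝ) ≤ ‖∑ k, X k ω‖ := norm_nonneg _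
      nlinarith
  -- second moment identity : ∫ ‖S‖² = ∑ ∫ ‖X k‖²
  have hinnerint : ∀ j k : Fin m, Integrable (fun ω => (inner ℝ (X j ω) (X k ω) : ℝ)) μ := by
    intro j k
    refine Integrable.mono' (integrable_const (L * L)) ?_ ?_
    · exact ((hmeas j).inner (hmeas k)).aestronglyMeasurable
    · filter_upwards [hall] with ω hω
      rw [Real.norm_eq_abs]
      calc |(inner ℝ (X j ω) (X k ω) : ℝ)| ≤ ‖X j ω‖ * ‖X k ω‖ := abs_real_inner_le_norm _ _
      _ ≤ L * L := by
          have := hω j; have := hω k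
          have h1 : (0:ℝ) ≤ ‖X j ω‖ := norm_nonneg _
          have h2 : (0:ℝ) ≤ ‖X k ω‖ := norm_nonneg _
          nlinarith
  have hcoordint : ∀ (j : Fin m) (i : Fin d), Integrable (fun ω => X j ω i) μ := by
    intro j i
    refine Integrable.mono' (integrable_const L) ?_ ?_
    · exact ((EuclideanSpace.proj i : EuclideanSpace ℝ (Fin d) →L[ℝ] ℝ).measurable.comp
        (hmeas j)).aestronglyMeasurable
    · filter_upwards [hall] with ω hω
      rw [Real.norm_eq_abs]
      exact (coord_abs_le_norm _ i).trans (hω j)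
  have hcoordmean : ∀ (j : Fin m) (i : Fin d), ∫ ω, X j ω i ∂μ = 0 := by
    intro j i
    have h1 := (EuclideanSpace.proj i :
      EuclideanSpace ℝ (Fin d) →L[ℝ] ℝ).integral_comp_comm (hint j)
    simpa [hmean j] using h1
  have hcross : ∀ j k : Fin m, j ≠ k → ∫ ω, (inner ℝ (X j ω) (X k ω) : ℝ) ∂μ = 0 := by
    intro j k hjk
    have hprodint : ∀ i : Fin d, Integrable (fun ω => X j ω i * X k ω i) μ := by
      intro i
      refine Integrable.mono' (integrable_const (L * L)) ?_ ?_
      · exact (((EuclideanSpace.proj i : EuclideanSpace ℝ (Fin d) →L[ℝ] ℝ).measurable.comp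
          (hmeas j)).mul ((EuclideanSpace.proj i :
            EuclideanSpace ℝ (Fin d) →L[ℝ] ℝ).measurable.comp (hmeas k))).aestronglyMeasurable
      · filter_upwards [hall] with ω hω
        rw [Real.norm_eq_abs, abs_mul]
        have h1 := (coord_abs_le_norm (X j ω) i).trans (hω j)
        have h2 := (coord_abs_le_norm (X k ω) i).trans (hω k)
        have h3 : (0:ℝ) ≤ |X j ω i| := abs_nonneg _
        have h4 : (0:ℝ) ≤ |X k ω i| := abs_nonneg _
        nlinarith
    have heq : (fun ω => (inner ℝ (X j ω) (X k ω) : ℝ))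
        = fun ω => ∑ i, X j ω i * X k ω i := by
      funext ω
      simp [PiLp.inner_apply, RCLike.inner_apply, conj_trivial]
      exact Finset.sum_congr rfl fun _ _ => mul_comm _ _
    rw [heq, integral_finset_sum _ (fun i _ => hprodint i)]
    refine Finset.sum_eq_zero fun i _ => ?_
    have hind : IndepFun (fun ω => X j ω i) (fun ω => X k ω i) μ := by
      have h0 : IndepFun (X j) (X k) μ := hindep.indepFun hjk
      exact h0.comp (EuclideanSpace.proj i :
        EuclideanSpace ℝ (Fin d) →L[ℝ] ℝ).measurable (EuclideanSpace.proj i :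
          EuclideanSpace ℝ (Fin d) →L[ℝ] ℝ).measurable
    have hmul := hind.integral_mul_eq_mul_integral (hcoordint j i).aestronglyMeasurable (hcoordint k i).aestronglyMeasurable
    have heq2 : ∫ ω, X j ω i * X k ω i ∂μ = (∫ ω, X j ω i ∂μ) * ∫ ω, X k ω i ∂μ := by
      simpa [Pi.mul_apply] using hmul
    rw [heq2, hcoordmean j i, zero_mul]
  have hSsq : ∫ ω, ‖∑ k, X k ω‖ ^ 2 ∂μ = ∑ k, ∫ ω, ‖X k ω‖ ^ 2 ∂μ := by
    have expand : ∀ ω : Ω, ‖∑ k, X k ω‖ ^ 2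
        = ∑ j, ∑ k, (inner ℝ (X j ω) (X k ω) : ℝ) := by
      intro ω
      rw [← real_inner_self_eq_norm_sq, sum_inner]
      exact Finset.sum_congr rfl fun j _ => inner_sum _ _ _
    calc ∫ ω, ‖∑ k, X k ω‖ ^ 2 ∂μ
        = ∫ ω, ∑ j, ∑ k, (inner ℝ (X j ω) (X k ω) : ℝ) ∂μ := by
          exact integral_congr_ae (Filter.Eventually.of_forall fun ω => expand ω)
    _ = ∑ j, ∫ ω, ∑ k, (inner ℝ (X j ω) (X k ω) : ℝ) ∂μ := by
          exact integral_finset_sum _ (fun j _ =>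
            integrable_finset_sum _ (fun k _ => hinnerint j k))
    _ = ∑ j, ∑ k, ∫ ω, (inner ℝ (X j ω) (X k ω) : ℝ) ∂μ := by
          exact Finset.sum_congr rfl fun j _ =>
            integral_finset_sum _ (fun k _ => hinnerint j k)
    _ = ∑ k, ∫ ω, ‖X k ω‖ ^ 2 ∂μ := by
          refine Finset.sum_congr rfl fun j _ => ?_
          rw [Finset.sum_eq_single j]
          · refine integral_congr_ae (Filter.Eventually.of_forall fun ω => ?_)
            simp only [real_inner_self_eq_norm_sq]
          · intro k _ hkj
            exact hcross j k (Ne.symm hkj)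
          · intro hj; exact absurd (Finset.mem_univ j) hj
  -- mean bound : ∫ ‖S‖ ≤ √M
  set A := ∫ ω, ‖∑ k, X k ω‖ ∂μ with hAdef
  have hA0 : 0 ≤ A := integral_nonneg fun ω => norm_nonneg _
  have hAsq : A ^ 2 ≤ M := by
    have h0 : 0 ≤ ∫ ω, (‖∑ k, X k ω‖ - A) ^ 2 ∂μ :=
      integral_nonneg fun ω => sq_nonneg _
    have hexp : ∫ ω, (‖∑ k, X k ω‖ - A) ^ 2 ∂μ
        = ∫ ω, ‖∑ k, X k ω‖ ^ 2 ∂μ - A ^ 2 := by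
      have heq : (fun ω => (‖∑ k, X k ω‖ - A) ^ 2)
          = fun ω => ‖∑ k, X k ω‖ ^ 2 + ((-(2 * A)) * ‖∑ k, X k ω‖ + A ^ 2) := by
        funext ω; ring
      rw [heq]
      have e1 : ∫ ω, (‖∑ k, X k ω‖ ^ 2 + ((-(2 * A)) * ‖∑ k, X k ω‖ + A ^ 2)) ∂μ
          = ∫ ω, ‖∑ k, X k ω‖ ^ 2 ∂μ
            + ∫ ω, ((-(2 * A)) * ‖∑ k, X k ω‖ + A ^ 2) ∂μ :=
        integral_add hSsqint ((hSnormint.const_mul _).add (integrable_const _))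
      have e2 : ∫ ω, ((-(2 * A)) * ‖∑ k, X k ω‖ + A ^ 2) ∂μ
          = ∫ ω, (-(2 * A)) * ‖∑ k, X k ω‖ ∂μ + ∫ _ω, A ^ 2 ∂μ :=
        integral_add (hSnormint.const_mul _) (integrable_const _)
      rw [e1, e2, integral_const_mul, integral_const]
      simp only [probReal_univ, smul_eq_mul, one_mul, ← hAdef]
      ring
    rw [hexp, hSsq] at h0
    linarith
  have hAle : A ≤ Real.sqrt M := by
    rw [Real.le_sqrt hA0 hM.le]
    exact hAsq
  -- Chernoff
  set l := τ / (2 * M) with hldef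
  have hl0 : 0 < l := by positivity
  have hτL : τ * L ≤ M := by
    rw [le_div_iff₀ hL] at hτ'
    exact hτ'
  have hlL : l * (2 * L) ≤ 1 := by
    have heq : l * (2 * L) = τ * L / M := by
      rw [hldef]; field_simp
    rw [heq, div_le_one hM]
    exact hτL
  have hmgf := mgf_aux μ X hmeas hindep L hL.le hbdd l hl0.le hlL Finset.univ 0
  simp only [zero_add] at hmgf
  -- hmgf : ∫ exp (l * (‖∑‖ - A)) ≤ exp (l² * ∑ ∫‖X k‖²)
  have hmgf2 : ∫ ω, Real.exp (l * (‖∑ k, X k ω‖ - A)) ∂μ ≤ Real.exp (l ^ 2 * M) := by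
    refine hmgf.trans ?_
    apply Real.exp_le_exp.2
    exact mul_le_mul_of_nonneg_left hvar (sq_nonneg l)
  have hfint : Integrable (fun ω => Real.exp (l * (‖∑ k, X k ω‖ - A))) μ := by
    refine Integrable.mono' (integrable_const (Real.exp (l * ((m : ℝ) * L + |A|)))) ?_ ?_
    · exact (Real.continuous_exp.comp (continuous_const.mul
        (continuous_id.sub continuous_const))).comp_aestronglyMeasurable
        hSmeas.norm.aestronglyMeasurable
    · filter_upwards [hSb] with ω hω
      rw [Real.norm_eq_abs, abs_of_nonneg (Real.exp_nonneg _)]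
      apply Real.exp_le_exp.2
      apply mul_le_mul_of_nonneg_left _ hl0.le
      have := neg_le_abs A
      linarith
  set ε := Real.exp (l * (Real.sqrt M + τ - A)) with hεdef
  have hε0 : 0 < ε := Real.exp_pos _
  have hsub : {ω | Real.sqrt M + τ ≤ ‖∑ k, X k ω‖}
      ⊆ {ω | ε ≤ Real.exp (l * (‖∑ k, X k ω‖ - A))} := by
    intro ω hω
    simp only [Set.mem_setOf_eq] at hω ⊢
    rw [hεdef]
    apply Real.exp_le_exp.2
    apply mul_le_mul_of_nonneg_left _ hl0.le
    linarith
  have hmarkov := mul_meas_ge_le_integral_of_nonneg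
    (Filter.Eventually.of_forall fun ω => Real.exp_nonneg _) hfint ε
  have hmono : (μ {ω | Real.sqrt M + τ ≤ ‖∑ k, X k ω‖}).toReal
      ≤ (μ {ω | ε ≤ Real.exp (l * (‖∑ k, X k ω‖ - A))}).toReal :=
    ENNReal.toReal_mono (measure_ne_top μ _) (measure_mono hsub)
  have hfinal : ε * (μ {ω | Real.sqrt M + τ ≤ ‖∑ k, X k ω‖}).toReal
      ≤ Real.exp (l ^ 2 * M) := by
    calc ε * (μ {ω | Real.sqrt M + τ ≤ ‖∑ k, X k ω‖}).toReal
        ≤ ε * (μ {ω | ε ≤ Real.exp (l * (‖∑ k, X k ω‖ - A))}).toReal :=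
          mul_le_mul_of_nonneg_left hmono hε0.le
    _ ≤ ∫ ω, Real.exp (l * (‖∑ k, X k ω‖ - A)) ∂μ := hmarkov
    _ ≤ Real.exp (l ^ 2 * M) := hmgf2
  have hres : (μ {ω | Real.sqrt M + τ ≤ ‖∑ k, X k ω‖}).toReal
      ≤ Real.exp (l ^ 2 * M) / ε := by
    rw [le_div_iff₀ hε0]
    linarith [hfinal]
  refine hres.trans ?_
  rw [hεdef, ← Real.exp_sub]
  apply Real.exp_le_exp.2
  have h1 : l * τ ≤ l * (Real.sqrt M + τ - A) := by
    apply mul_le_mul_of_nonneg_left _ hl0.le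
    linarith
  have h2 : l ^ 2 * M - l * τ = -τ ^ 2 / (4 * M) := by
    rw [hldef]
    field_simp
    ring
  linarith
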